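/- Let X be a non-singular C² vector field on the 2-torus 𝕋² whose flow is the suspension of a circle diffeomorphism f : S¹ → S¹ in which every orbit is periodic (f = id), with continuous return time function τ : S¹ → (0,∞) giving the period of each orbit. If τ is non-constant, then X is not separating: for every ε > 0 there exist points x₁ ≠ x₂ on distinct orbits with d(X_t(x₁), X_t(x₂)) ≤ ε for all t ∈ ℝ. -/

import Mathlib

open Filter Topology Set

private lemma circle_ne_of_close {a b : ℝ} (h : a ≠ b) (h2 : |a - b| < 1) :
    (a : AddCircle (1 : ℝ)) ≠ b := by
  intro he
  rw [QuotientAddGroup.eq, AddSubgroup.mem_zmultiples_iff] at he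
  obtain ⟨k, hk⟩ := he
  rw [zsmul_eq_mul, mul_one] at hk
  have h0 : (k : ℝ) ≠ 0 := by rw [hk]; intro hc; apply h; linarith
  have h1 : |(k : ℝ)| < 1 := by rw [hk]; rw [abs_sub_comm] at h2; convert h2 using 2; ring
  have hge : (1 : ℝ) ≤ |(k : ℝ)| := by
    have : k ≠ 0 := by exact_mod_cast h0
    exact_mod_cast Int.one_le_abs this
  linarith

private lemma flow_int_periodic {M : Type*} [TopologicalSpace M] (φ : Flow ℝ M) {c : ℝ}
    {x : M} (hx : φ c x = x) : ∀ n : ℤ, φ (c * n) x = x := by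
  have hneg : φ (-c) x = x := by
    conv_lhs => rw [← hx]
    rw [← Flow.map_add, neg_add_cancel, Flow.map_zero_apply]
  intro n
  induction n using Int.induction_on with
  | zero => simp [φ.map_zero_apply x]
  | succ n ih =>
      push_cast
      rw [mul_add, mul_one, Flow.map_add, hx]
      exact_mod_cast ih
  | pred n ih =>
      push_cast
      rw [mul_sub, mul_one, sub_eq_add_neg, Flow.map_add, hneg]
      exact_mod_cast ih

/-- A (suspension) flow on a compact metric space in which every orbit crosses
a circle cross-section exactly once and is periodic with period `τ(θ)`, `τ` continuous: if `τ` is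
non-constant then the flow is not separating — for every `ε > 0` there are points on distinct
orbits staying `ε`-close for all time. -/
theorem stmt_13 {M : Type*} [MetricSpace M] [CompactSpace M]
    (φ : Flow ℝ M)
    (ι : AddCircle (1 : ℝ) → M) (hι : Continuous ι) (hιinj : Function.Injective ι)
    (τ : AddCircle (1 : ℝ) → ℝ) (hτ : Continuous τ) (hτpos : ∀ θ, 0 < τ θ)
    (hper : ∀ θ, φ (τ θ) (ι θ) = ι θ)
    (hmin : ∀ θ (t : ℝ), 0 < t → t < τ θ → φ t (ι θ) ≠ ι θ)
    (honce : ∀ θ θ' (t : ℝ), φ t (ι θ) = ι θ' → θ = θ')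
    (hcover : ∀ x : M, ∃ (θ : AddCircle (1 : ℝ)) (t : ℝ), φ t (ι θ) = x)
    (hτnc : ∃ θ θ', τ θ ≠ τ θ') :
    ∀ ε : ℝ, 0 < ε → ∃ x₁ x₂ : M, x₁ ≠ x₂ ∧ (∀ s : ℝ, φ s x₁ ≠ x₂) ∧
      ∀ t : ℝ, dist (φ t x₁) (φ t x₂) ≤ ε := by
  intro ε hε
  have hcoe : Continuous (fun a : ℝ => (a : AddCircle (1 : ℝ))) := AddCircle.continuous_mk' 1
  set g : ℝ → ℝ := fun a => τ (a : AddCircle (1 : ℝ)) with hgdef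
  have hgc : Continuous g := hτ.comp hcoe
  -- a maximum point of τ
  obtain ⟨θmax, -, hmax⟩ := isCompact_univ.exists_isMaxOn
    (⟨(0 : AddCircle (1 : ℝ)), mem_univ _⟩) hτ.continuousOn
  have hmax' : ∀ θ : AddCircle (1 : ℝ), τ θ ≤ τ θmax := fun θ => hmax (mem_univ θ)
  obtain ⟨a₀, rfl⟩ := QuotientAddGroup.mk_surjective θmax
  set T : ℝ := g a₀ with hTdef
  -- uniform continuity of the flow on [0,T] × M
  have hflow : Continuous (fun p : ℝ × M => φ p.1 p.2) := φ.cont'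
  have hK : IsCompact ((Icc (0 : ℝ) T) ×ˢ (univ : Set M)) :=
    (isCompact_Icc).prod isCompact_univ
  have huc := hK.uniformContinuousOn_of_continuous hflow.continuousOn
  rw [Metric.uniformContinuousOn_iff] at huc
  obtain ⟨δ', hδ'pos, hδ'⟩ := huc ε hε
  -- continuity of ι ∘ coe at a₀
  have hιc : Continuous (fun a : ℝ => ι (a : AddCircle (1 : ℝ))) := hι.comp hcoe
  obtain ⟨δ₀, hδ₀pos, hδ₀⟩ := Metric.continuous_iff.mp hιc a₀ (δ' / 2) (by linarith)
  set δ : ℝ := min (δ₀ / 2) (1 / 4) with hδdef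
  have hδpos : 0 < δ := lt_min (by linarith) (by norm_num)
  have hδlt : δ < δ₀ := lt_of_le_of_lt (min_le_left _ _) (by linarith)
  have hδ14 : δ ≤ 1 / 4 := min_le_right _ _
  have hclose : ∀ a : ℝ, |a - a₀| ≤ δ → dist (ι (a : AddCircle (1 : ℝ))) (ι (a₀ : AddCircle (1 : ℝ))) < δ' / 2 := by
    intro a ha
    exact hδ₀ a (by rw [Real.dist_eq]; exact lt_of_le_of_lt ha hδlt)
  -- find a < b within δ of a₀ with equal periods
  have key : ∃ a b : ℝ, a < b ∧ |a - a₀| ≤ δ ∧ |b - a₀| ≤ δ ∧ g a = g b := by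
    by_cases hL : ∀ s ∈ Icc (a₀ - δ) a₀, g s = g a₀
    · refine ⟨a₀ - δ / 2, a₀, by linarith, ?_, ?_, ?_⟩
      · rw [abs_sub_comm, abs_of_nonneg (by linarith)]; linarith
      · simpa using hδpos.le
      · exact hL _ ⟨by linarith, by linarith⟩
    · by_cases hR : ∀ s ∈ Icc a₀ (a₀ + δ), g s = g a₀
      · refine ⟨a₀, a₀ + δ / 2, by linarith, by simpa using hδpos.le, ?_, ?_⟩
        · rw [abs_of_nonneg (by linarith)]; linarith
        · exact (hR _ ⟨by linarith, by linarith⟩).symm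
      · push_neg at hL hR
        obtain ⟨s₁, hs₁mem, hs₁⟩ := hL
        obtain ⟨s₂, hs₂mem, hs₂⟩ := hR
        have hs₁lt : g s₁ < g a₀ := lt_of_le_of_ne (hmax' _) hs₁
        have hs₂lt : g s₂ < g a₀ := lt_of_le_of_ne (hmax' _) hs₂
        set c : ℝ := (max (g s₁) (g s₂) + g a₀) / 2 with hcdef
        have hc1 : g s₁ ≤ c := by
          have := le_max_left (g s₁) (g s₂); simp only [hcdef]
          have : max (g s₁) (g s₂) < g a₀ := max_lt hs₁lt hs₂lt
          have := le_max_left (g s₁) (g s₂); linarith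
        have hc2 : g s₂ ≤ c := by
          have : max (g s₁) (g s₂) < g a₀ := max_lt hs₁lt hs₂lt
          have := le_max_right (g s₁) (g s₂); linarith
        have hclt : c < g a₀ := by
          have : max (g s₁) (g s₂) < g a₀ := max_lt hs₁lt hs₂lt; simp only [hcdef]; linarith
        obtain ⟨a, hamem, ha⟩ := intermediate_value_Icc hs₁mem.2 hgc.continuousOn
          (⟨hc1, hclt.le⟩ : c ∈ Icc (g s₁) (g a₀))
        obtain ⟨b, hbmem, hb⟩ := intermediate_value_Icc' hs₂mem.1 hgc.continuousOn
          (⟨hc2, hclt.le⟩ : c ∈ Icc (g s₂) (g a₀))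
        have hane : a ≠ a₀ := by intro h; rw [h] at ha; exact absurd ha hclt.ne'
        have hab : a < b := lt_of_lt_of_le (lt_of_le_of_ne hamem.2 hane) hbmem.1
        refine ⟨a, b, hab, ?_, ?_, by rw [ha, hb]⟩
        · rw [abs_sub_comm, abs_of_nonneg (by linarith [hamem.1, hamem.2, hs₁mem.1])]
          linarith [hamem.1, hs₁mem.1]
        · rw [abs_of_nonneg (by linarith [hbmem.1])]
          linarith [hbmem.2, hs₂mem.2]
  obtain ⟨a, b, hab, haδ, hbδ, hgab⟩ := key
  set θ₁ : AddCircle (1 : ℝ) := (a : AddCircle (1 : ℝ)) with hθ₁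
  set θ₂ : AddCircle (1 : ℝ) := (b : AddCircle (1 : ℝ)) with hθ₂
  have hθne : θ₁ ≠ θ₂ := by
    apply circle_ne_of_close hab.ne
    have : |a - b| ≤ 2 * δ := by
      have := abs_sub_abs_le_abs_sub a b
      calc |a - b| = |(a - a₀) - (b - a₀)| := by ring_nf
        _ ≤ |a - a₀| + |b - a₀| := abs_sub _ _
        _ ≤ 2 * δ := by linarith
    linarith [hδ14]
  set c : ℝ := τ θ₁ with hcdef
  have hcpos : 0 < c := hτpos θ₁
  have hcT : c ≤ T := hmax' θ₁
  have hτθ₂ : τ θ₂ = c := hgab.symm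
  set x₁ : M := ι θ₁ with hx₁
  set x₂ : M := ι θ₂ with hx₂
  have hx₁per : φ c x₁ = x₁ := hper θ₁
  have hx₂per : φ c x₂ = x₂ := by rw [← hτθ₂]; exact hper θ₂
  have hdx : dist x₁ x₂ < δ' :=
    calc dist x₁ x₂ ≤ dist x₁ (ι (a₀ : AddCircle (1 : ℝ))) + dist (ι (a₀ : AddCircle (1 : ℝ))) x₂ :=
          dist_triangle _ _ _
      _ < δ' / 2 + δ' / 2 := by
          refine add_lt_add (hclose a haδ) ?_
          rw [dist_comm]; exact hclose b hbδ
      _ = δ' := by ring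
  refine ⟨x₁, x₂, hιinj.ne hθne, ?_, ?_⟩
  · intro s hs
    exact hθne (honce θ₁ θ₂ s hs)
  · intro t
    set n : ℤ := ⌊t / c⌋ with hn
    set t' : ℝ := t - c * n with ht'
    have hfl : (n : ℝ) * c ≤ t := (le_div_iff₀ hcpos).mp (Int.floor_le _)
    have hfu : t < ((n : ℝ) + 1) * c := (div_lt_iff₀ hcpos).mp (Int.lt_floor_add_one _)
    have ht'0 : 0 ≤ t' := by simp only [ht']; nlinarith
    have ht'c : t' < c := by simp only [ht']; nlinarith
    have hred : ∀ x : M, φ c x = x → φ t x = φ t' x := by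
      intro x hx
      have : φ t x = φ (t' + c * n) x := by norm_num [ht']
      rw [this, Flow.map_add, flow_int_periodic φ hx n]
    rw [hred x₁ hx₁per, hred x₂ hx₂per]
    have hmem : (t', x₁) ∈ (Icc (0 : ℝ) T) ×ˢ (univ : Set M) :=
      ⟨⟨ht'0, le_trans ht'c.le hcT⟩, mem_univ _⟩
    have hmem' : (t', x₂) ∈ (Icc (0 : ℝ) T) ×ˢ (univ : Set M) :=
      ⟨⟨ht'0, le_trans ht'c.le hcT⟩, mem_univ _⟩
    have hdp : dist ((t', x₁) : ℝ × M) (t', x₂) < δ' := by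
      rw [Prod.dist_eq]
      simp only [dist_self]
      exact max_lt hδ'pos hdx
    exact le_of_lt (hδ' _ hmem _ hmem' hdp)
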